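/- Let Γ be the Cayley graph of the symmetric group S_n with respect to the adjacent transpositions τ₁,...,τ_{n-1}. Define S₀ on the edge of Γ corresponding to the thin rectangle r ∈ Rect(x,y) in the (n-1)×(n-1) square by S₀(r) = (-1)^{I(x, {(x₁,x₂)∈x : x₂ ≤ h(r)})}, where h(r) is the height of the top edge of r. Then S₀ satisfies: (Sq) the product of S₀ over the four edges of any square in Γ (commuting transpositions τ_i, τ_j with |i-j|>1) is -1, and (Hex) the product of S₀ over the six edges of any hexagon in Γ (braid relation τ_iτ_{i+1}τ_i = τ_{i+1}τ_iτ_{i+1}) is +1. -/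

import Mathlib

/-- The adjacent transposition `τ_i = (i, i+1)` in the symmetric group on `{0,…,n-1}`. -/
def adjSwap (n : ℕ) (i : ℕ) (h : i + 1 < n) : Equiv.Perm (Fin n) :=
  Equiv.swap ⟨i, Nat.lt_of_succ_lt h⟩ ⟨i + 1, h⟩

/-- `I(x, {(x₁,x₂) ∈ x : x₂ ≤ h})` for the grid state `x` given as the graph of a
permutation: the number of pairs of points of `x`, one strictly dominating the other
in both coordinates, whose upper point has height at most `h`. -/
def IxLe (n : ℕ) (x : Equiv.Perm (Fin n)) (h : ℕ) : ℕ :=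
  ((Finset.univ : Finset (Fin n × Fin n)).filter
    (fun p => p.1 < p.2 ∧ x p.1 < x p.2 ∧ (x p.2).val ≤ h)).card

/-- The sign `S₀` of the edge of the Cayley graph of `S_n` joining `σ` and `σ·τ_i`,
given by the formula `S₀(r) = (-1)^{I(x, {(x₁,x₂) ∈ x : x₂ ≤ h(r)})}`, where `r` is the
corresponding thin rectangle in the `(n-1) × (n-1)` square, `x` is its initial grid
state (the one containing the lower-left corner of `r`), and `h(r)` is the height of
the top edge of `r`. -/
def edgeSign (n : ℕ) (σ : Equiv.Perm (Fin n)) (i : ℕ) (h : i + 1 < n) : ℤ :=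
  let a : Fin n := ⟨i, Nat.lt_of_succ_lt h⟩
  let b : Fin n := ⟨i + 1, h⟩
  let x : Equiv.Perm (Fin n) := if σ a < σ b then σ else σ * adjSwap n i h
  (-1) ^ IxLe n x (max (σ a) (σ b)).val

/-- The sign assignment `S₀` on the Cayley graph of `S_n` satisfies:
(Sq) the product of `S₀` over the four edges of any square (coming from commuting
adjacent transpositions `τ_i`, `τ_j` with `|i-j| > 1`) is `-1`; and
(Hex) the product of `S₀` over the six edges of any hexagon (coming from the braid
relation `τ_i τ_{i+1} τ_i = τ_{i+1} τ_i τ_{i+1}`) is `+1`. -/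


lemma adjSwap_apply {n j : ℕ} (hj : j + 1 < n) (r : Fin n) :
    adjSwap n j hj r = if r = ⟨j, Nat.lt_of_succ_lt hj⟩ then ⟨j+1, hj⟩
      else if r = ⟨j+1, hj⟩ then ⟨j, Nat.lt_of_succ_lt hj⟩ else r := by
  simp [adjSwap, Equiv.swap_apply_def]

lemma adjSwap_lt {n j : ℕ} (hj : j + 1 < n) {p q : Fin n} (hpq : p < q)
    (hne : ¬(p = ⟨j, Nat.lt_of_succ_lt hj⟩ ∧ q = ⟨j+1, hj⟩)) :
    adjSwap n j hj p < adjSwap n j hj q := by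
  rw [adjSwap_apply, adjSwap_apply]
  simp only [Fin.lt_def, Fin.ext_iff] at *
  split_ifs <;> simp_all <;> omega

lemma adjSwap_mul_self {n j : ℕ} (hj : j + 1 < n) (x : Equiv.Perm (Fin n)) :
    x * adjSwap n j hj * adjSwap n j hj = x := by
  rw [mul_assoc, adjSwap, Equiv.swap_mul_self, mul_one]

section
variable {n : ℕ}

private def Sset (x : Equiv.Perm (Fin n)) (h : ℕ) : Finset (Fin n × Fin n) :=
  (Finset.univ.filter (fun p => p.1 < p.2 ∧ x p.1 < x p.2 ∧ (x p.2).val ≤ h))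

lemma IxLe_eq_Sset (x : Equiv.Perm (Fin n)) (h : ℕ) : IxLe n x h = (Sset x h).card := rfl

lemma Sset_map {j : ℕ} (hj : j + 1 < n) (z : Equiv.Perm (Fin n)) (h : ℕ)
    (p : Fin n × Fin n) (hp : p ∈ Sset (z * adjSwap n j hj) h)
    (hne : p ≠ (⟨j, Nat.lt_of_succ_lt hj⟩, ⟨j+1, hj⟩)) :
    (adjSwap n j hj p.1, adjSwap n j hj p.2) ∈ Sset z h
      ∧ (adjSwap n j hj p.1, adjSwap n j hj p.2) ≠ (⟨j, Nat.lt_of_succ_lt hj⟩, ⟨j+1, hj⟩) := by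
  set a : Fin n := ⟨j, Nat.lt_of_succ_lt hj⟩
  set b : Fin n := ⟨j+1, hj⟩
  rw [Sset, Finset.mem_filter] at hp ⊢
  simp only [Sset, Finset.mem_filter, Finset.mem_univ, true_and, Equiv.Perm.mul_apply] at hp ⊢
  obtain ⟨h1, h2, h3⟩ := hp
  have hab : ¬(p.1 = a ∧ p.2 = b) := by
    intro ⟨e1, e2⟩; exact hne (Prod.ext e1 e2)
  refine ⟨⟨adjSwap_lt hj h1 hab, h2, h3⟩, ?_⟩
  intro hEq
  have e1 : adjSwap n j hj p.1 = a := congrArg Prod.fst hEq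
  have e2 : adjSwap n j hj p.2 = b := congrArg Prod.snd hEq
  have hb : adjSwap n j hj b = a := Equiv.swap_apply_right _ _
  have ha : adjSwap n j hj a = b := Equiv.swap_apply_left _ _
  have p1b : p.1 = b := (adjSwap n j hj).injective (by rw [e1, hb])
  have p2a : p.2 = a := (adjSwap n j hj).injective (by rw [e2, ha])
  rw [p1b, p2a] at h1
  exact absurd h1 (by simp [a, b, Fin.lt_def])

lemma Sset_sdiff_card {j : ℕ} (hj : j + 1 < n) (x : Equiv.Perm (Fin n)) (h : ℕ) :
    ((Sset (x * adjSwap n j hj) h) \ {(⟨j, Nat.lt_of_succ_lt hj⟩, ⟨j+1, hj⟩)}).card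
      = ((Sset x h) \ {(⟨j, Nat.lt_of_succ_lt hj⟩, ⟨j+1, hj⟩)}).card := by
  have hx : x = (x * adjSwap n j hj) * adjSwap n j hj := (adjSwap_mul_self hj x).symm
  refine Finset.card_bij' (fun p _ => (adjSwap n j hj p.1, adjSwap n j hj p.2))
    (fun p _ => (adjSwap n j hj p.1, adjSwap n j hj p.2)) ?_ ?_ ?_ ?_
  · intro p hp
    rw [Finset.mem_sdiff, Finset.mem_singleton] at hp ⊢
    exact Sset_map hj x h p hp.1 hp.2
  · intro p hp
    rw [Finset.mem_sdiff, Finset.mem_singleton] at hp ⊢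
    rw [hx] at hp
    exact Sset_map hj (x * adjSwap n j hj) h p hp.1 hp.2
  · intro p _
    simp [adjSwap, Equiv.swap_apply_self]
  · intro p _
    simp [adjSwap, Equiv.swap_apply_self]

lemma mem_Sset_pair {j : ℕ} (hj : j + 1 < n) (x : Equiv.Perm (Fin n)) (h : ℕ) :
    ((⟨j, Nat.lt_of_succ_lt hj⟩, ⟨j+1, hj⟩) : Fin n × Fin n) ∈ Sset x h
      ↔ (x ⟨j, Nat.lt_of_succ_lt hj⟩ < x ⟨j+1, hj⟩ ∧ (x ⟨j+1, hj⟩).val ≤ h) := by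
  simp only [Sset, Finset.mem_filter, Finset.mem_univ, true_and]
  have hab : (⟨j, Nat.lt_of_succ_lt hj⟩ : Fin n) < ⟨j+1, hj⟩ := by
    simp [Fin.mk_lt_mk]
  tauto

lemma IxLe_mul_swap {j : ℕ} (hj : j + 1 < n) (x : Equiv.Perm (Fin n)) (h : ℕ) :
    IxLe n (x * adjSwap n j hj) h
      + (if x ⟨j, Nat.lt_of_succ_lt hj⟩ < x ⟨j+1, hj⟩ ∧ (x ⟨j+1, hj⟩).val ≤ h then 1 else 0)
    = IxLe n x h
      + (if x ⟨j+1, hj⟩ < x ⟨j, Nat.lt_of_succ_lt hj⟩ ∧ (x ⟨j, Nat.lt_of_succ_lt hj⟩).val ≤ h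
          then 1 else 0) := by
  have key : ∀ z : Equiv.Perm (Fin n),
      IxLe n z h = ((Sset z h) \ {((⟨j, Nat.lt_of_succ_lt hj⟩, ⟨j+1, hj⟩) : Fin n × Fin n)}).card
        + (if z ⟨j, Nat.lt_of_succ_lt hj⟩ < z ⟨j+1, hj⟩ ∧ (z ⟨j+1, hj⟩).val ≤ h then 1 else 0) := by
    intro z
    rw [IxLe_eq_Sset, ← Finset.card_sdiff_add_card_inter (Sset z h)
      {(⟨j, Nat.lt_of_succ_lt hj⟩, ⟨j+1, hj⟩)}]
    congr 1
    by_cases hm : ((⟨j, Nat.lt_of_succ_lt hj⟩, ⟨j+1, hj⟩) : Fin n × Fin n) ∈ Sset z h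
    · rw [Finset.inter_singleton_of_mem hm, if_pos ((mem_Sset_pair hj z h).1 hm)]
      simp
    · rw [Finset.inter_singleton_of_notMem hm,
        if_neg (fun hc => hm ((mem_Sset_pair hj z h).2 hc))]
      simp
  rw [key, key, Sset_sdiff_card hj x h]
  have e1 : (x * adjSwap n j hj) ⟨j, Nat.lt_of_succ_lt hj⟩ = x ⟨j+1, hj⟩ := by
    simp [Equiv.Perm.mul_apply, adjSwap, Equiv.swap_apply_left]
  have e2 : (x * adjSwap n j hj) ⟨j+1, hj⟩ = x ⟨j, Nat.lt_of_succ_lt hj⟩ := by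
    simp [Equiv.Perm.mul_apply, adjSwap, Equiv.swap_apply_right]
  rw [e1, e2]
  omega

end

def Fsgn (n : ℕ) (x : Equiv.Perm (Fin n)) (h : ℕ) : ℤ := (-1) ^ IxLe n x h

def eps (m h : ℕ) : ℤ := if m ≤ h then -1 else 1

section
variable {n : ℕ}

lemma Fsgn_sq (x : Equiv.Perm (Fin n)) (h : ℕ) : Fsgn n x h * Fsgn n x h = 1 := by
  rw [Fsgn, ← pow_add]
  exact Even.neg_one_pow ⟨IxLe n x h, rfl⟩

lemma eps_eq_pow (m h : ℕ) : eps m h = (-1 : ℤ) ^ (if m ≤ h then 1 else 0) := by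
  rw [eps]; split_ifs <;> simp

lemma Fsgn_mul_swap {j : ℕ} (hj : j + 1 < n) (x : Equiv.Perm (Fin n)) (h : ℕ) :
    Fsgn n (x * adjSwap n j hj) h
      = eps (max (x ⟨j, Nat.lt_of_succ_lt hj⟩).val (x ⟨j+1, hj⟩).val) h * Fsgn n x h := by
  have key := IxLe_mul_swap hj x h
  have hne : (x ⟨j, Nat.lt_of_succ_lt hj⟩).val ≠ (x ⟨j+1, hj⟩).val := by
    intro hc
    have : (⟨j, Nat.lt_of_succ_lt hj⟩ : Fin n) = ⟨j+1, hj⟩ :=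
      x.injective (Fin.val_injective hc)
    rw [Fin.mk.injEq] at this
    omega
  have hABC : (if x ⟨j, Nat.lt_of_succ_lt hj⟩ < x ⟨j+1, hj⟩ ∧ (x ⟨j+1, hj⟩).val ≤ h
        then 1 else 0)
      + (if x ⟨j+1, hj⟩ < x ⟨j, Nat.lt_of_succ_lt hj⟩ ∧ (x ⟨j, Nat.lt_of_succ_lt hj⟩).val ≤ h
        then 1 else 0)
      = (if max (x ⟨j, Nat.lt_of_succ_lt hj⟩).val (x ⟨j+1, hj⟩).val ≤ h then 1 else 0) := by
    simp only [Fin.lt_def]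
    split_ifs <;> omega
  have hCpow : eps (max (x ⟨j, Nat.lt_of_succ_lt hj⟩).val (x ⟨j+1, hj⟩).val) h
      = (-1 : ℤ) ^ (if max (x ⟨j, Nat.lt_of_succ_lt hj⟩).val (x ⟨j+1, hj⟩).val ≤ h
        then 1 else 0) := eps_eq_pow _ _
  rw [Fsgn, Fsgn, hCpow]
  generalize hA : (if x ⟨j, Nat.lt_of_succ_lt hj⟩ < x ⟨j+1, hj⟩ ∧ (x ⟨j+1, hj⟩).val ≤ h
      then (1:ℕ) else 0) = A at key hABC
  generalize hB : (if x ⟨j+1, hj⟩ < x ⟨j, Nat.lt_of_succ_lt hj⟩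
        ∧ (x ⟨j, Nat.lt_of_succ_lt hj⟩).val ≤ h then (1:ℕ) else 0) = B at key hABC
  generalize hC : (if max (x ⟨j, Nat.lt_of_succ_lt hj⟩).val (x ⟨j+1, hj⟩).val ≤ h
      then (1:ℕ) else 0) = C at hABC ⊢
  have h2 : (-1 : ℤ) ^ (IxLe n (x * adjSwap n j hj) h + C) = (-1) ^ (IxLe n x h) := by
    have e : IxLe n (x * adjSwap n j hj) h + C = IxLe n x h + (B + B) := by omega
    rw [e, pow_add, Even.neg_one_pow ⟨B, rfl⟩, mul_one]
  have hCsq : ((-1 : ℤ) ^ C) * ((-1 : ℤ) ^ C) = 1 := by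
    rw [← pow_add]; exact Even.neg_one_pow ⟨C, rfl⟩
  rw [pow_add] at h2
  calc (-1 : ℤ) ^ IxLe n (x * adjSwap n j hj) h
      = (-1) ^ IxLe n (x * adjSwap n j hj) h * ((-1) ^ C * (-1) ^ C) := by rw [hCsq, mul_one]
    _ = ((-1) ^ IxLe n (x * adjSwap n j hj) h * (-1) ^ C) * (-1) ^ C := by ring
    _ = (-1) ^ IxLe n x h * (-1) ^ C := by rw [h2]
    _ = (-1) ^ C * (-1) ^ IxLe n x h := by ring

end

section
variable {n : ℕ}

lemma fin_val_max (a b : Fin n) : (max a b).val = max a.val b.val := rfl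

lemma edgeSign_eq (σ : Equiv.Perm (Fin n)) (i : ℕ) (hi : i + 1 < n) :
    edgeSign n σ i hi = (if σ ⟨i, Nat.lt_of_succ_lt hi⟩ < σ ⟨i+1, hi⟩ then 1 else -1)
      * Fsgn n σ (max (σ ⟨i, Nat.lt_of_succ_lt hi⟩).val (σ ⟨i+1, hi⟩).val) := by
  simp only [edgeSign, fin_val_max]
  split_ifs with hlt
  · rw [one_mul, Fsgn]
  · have h2 := Fsgn_mul_swap hi σ
      (max (σ ⟨i, Nat.lt_of_succ_lt hi⟩).val (σ ⟨i+1, hi⟩).val)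
    rw [Fsgn, Fsgn, eps, if_pos (le_refl _)] at h2
    rw [h2, Fsgn]

end

section
variable {n : ℕ}

lemma mul_adjSwap_apply_of_ne {j : ℕ} (hj : j + 1 < n) (σ : Equiv.Perm (Fin n)) (p : Fin n)
    (h1 : p.val ≠ j) (h2 : p.val ≠ j + 1) : (σ * adjSwap n j hj) p = σ p := by
  rw [Equiv.Perm.mul_apply, adjSwap,
    Equiv.swap_apply_of_ne_of_ne (fun hc => h1 (congrArg Fin.val hc))
      (fun hc => h2 (congrArg Fin.val hc))]

lemma mul_adjSwap_fst {j : ℕ} (hj : j + 1 < n) (σ : Equiv.Perm (Fin n)) :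
    (σ * adjSwap n j hj) ⟨j, Nat.lt_of_succ_lt hj⟩ = σ ⟨j+1, hj⟩ := by
  rw [Equiv.Perm.mul_apply, adjSwap, Equiv.swap_apply_left]

lemma mul_adjSwap_snd {j : ℕ} (hj : j + 1 < n) (σ : Equiv.Perm (Fin n)) :
    (σ * adjSwap n j hj) ⟨j+1, hj⟩ = σ ⟨j, Nat.lt_of_succ_lt hj⟩ := by
  rw [Equiv.Perm.mul_apply, adjSwap, Equiv.swap_apply_right]

lemma perm_val_ne (σ : Equiv.Perm (Fin n)) {p q : Fin n} (h : p.val ≠ q.val) :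
    (σ p).val ≠ (σ q).val := by
  intro hc
  exact h (congrArg Fin.val (σ.injective (Fin.val_injective hc)))

lemma sgn_ite_sq (P : Prop) [Decidable P] :
    (if P then (1:ℤ) else -1) * (if P then 1 else -1) = 1 := by
  split_ifs <;> norm_num

lemma eps_pair {m1 m2 : ℕ} (h : m1 ≠ m2) : eps m1 m2 * eps m2 m1 = -1 := by
  rw [eps, eps]; split_ifs <;> omega

theorem square_part (n : ℕ) (σ : Equiv.Perm (Fin n)) (i j : ℕ) (hi : i + 1 < n)
    (hj : j + 1 < n) (hij : i + 1 < j) :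
    edgeSign n σ i hi * edgeSign n (σ * adjSwap n i hi) j hj
      * edgeSign n (σ * adjSwap n j hj) i hi * edgeSign n σ j hj = -1 := by
  rw [edgeSign_eq, edgeSign_eq, edgeSign_eq, edgeSign_eq]
  rw [mul_adjSwap_apply_of_ne hi σ ⟨j, Nat.lt_of_succ_lt hj⟩ (by simp; omega) (by simp; omega)]
  rw [mul_adjSwap_apply_of_ne hi σ ⟨j+1, hj⟩ (by simp; omega) (by simp; omega)]
  rw [mul_adjSwap_apply_of_ne hj σ ⟨i, Nat.lt_of_succ_lt hi⟩ (by simp; omega) (by simp; omega)]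
  rw [mul_adjSwap_apply_of_ne hj σ ⟨i+1, hi⟩ (by simp; omega) (by simp; omega)]
  rw [Fsgn_mul_swap hi σ, Fsgn_mul_swap hj σ]
  have hMij : max (σ ⟨i, Nat.lt_of_succ_lt hi⟩).val (σ ⟨i+1, hi⟩).val
      ≠ max (σ ⟨j, Nat.lt_of_succ_lt hj⟩).val (σ ⟨j+1, hj⟩).val := by
    have h1 := perm_val_ne σ (p := ⟨i, Nat.lt_of_succ_lt hi⟩) (q := ⟨j, Nat.lt_of_succ_lt hj⟩)
      (by simp; omega)
    have h2 := perm_val_ne σ (p := ⟨i, Nat.lt_of_succ_lt hi⟩) (q := ⟨j+1, hj⟩) (by simp; omega)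
    have h3 := perm_val_ne σ (p := ⟨i+1, hi⟩) (q := ⟨j, Nat.lt_of_succ_lt hj⟩) (by simp; omega)
    have h4 := perm_val_ne σ (p := ⟨i+1, hi⟩) (q := ⟨j+1, hj⟩) (by simp; omega)
    omega
  trans ((if σ ⟨i, Nat.lt_of_succ_lt hi⟩ < σ ⟨i+1, hi⟩ then (1:ℤ) else -1)
      * (if σ ⟨i, Nat.lt_of_succ_lt hi⟩ < σ ⟨i+1, hi⟩ then (1:ℤ) else -1))
    * ((if σ ⟨j, Nat.lt_of_succ_lt hj⟩ < σ ⟨j+1, hj⟩ then (1:ℤ) else -1)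
      * (if σ ⟨j, Nat.lt_of_succ_lt hj⟩ < σ ⟨j+1, hj⟩ then (1:ℤ) else -1))
    * (Fsgn n σ (max (σ ⟨i, Nat.lt_of_succ_lt hi⟩).val (σ ⟨i+1, hi⟩).val)
      * Fsgn n σ (max (σ ⟨i, Nat.lt_of_succ_lt hi⟩).val (σ ⟨i+1, hi⟩).val))
    * (Fsgn n σ (max (σ ⟨j, Nat.lt_of_succ_lt hj⟩).val (σ ⟨j+1, hj⟩).val)
      * Fsgn n σ (max (σ ⟨j, Nat.lt_of_succ_lt hj⟩).val (σ ⟨j+1, hj⟩).val))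
    * (eps (max (σ ⟨i, Nat.lt_of_succ_lt hi⟩).val (σ ⟨i+1, hi⟩).val)
        (max (σ ⟨j, Nat.lt_of_succ_lt hj⟩).val (σ ⟨j+1, hj⟩).val)
      * eps (max (σ ⟨j, Nat.lt_of_succ_lt hj⟩).val (σ ⟨j+1, hj⟩).val)
        (max (σ ⟨i, Nat.lt_of_succ_lt hi⟩).val (σ ⟨i+1, hi⟩).val))
  · ring
  · rw [sgn_ite_sq, sgn_ite_sq, Fsgn_sq, Fsgn_sq, eps_pair hMij]
    norm_num

end

section
variable {n : ℕ}

set_option maxHeartbeats 1000000 in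
lemma eps_nine (u v w : ℕ) (h12 : u ≠ v) (h13 : u ≠ w) (h23 : v ≠ w) :
    eps (max u v) (max u v) * eps (max u w) (max u v) * eps (max v w) (max u v)
    * (eps (max u v) (max u w) * eps (max u w) (max u w) * eps (max v w) (max u w))
    * (eps (max u v) (max v w) * eps (max u w) (max v w) * eps (max v w) (max v w)) = -1 := by
  simp only [eps]
  split_ifs <;> omega

lemma sgn_pair {a b : Fin n} (h : a ≠ b) :
    (if a < b then (1:ℤ) else -1) * (if b < a then 1 else -1) = -1 := by
  rcases lt_or_gt_of_ne h with hlt | hgt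
  · rw [if_pos hlt, if_neg (asymm hlt)]; norm_num
  · rw [if_neg (asymm hgt), if_pos hgt]; norm_num

theorem hexagon_part (n : ℕ) (σ : Equiv.Perm (Fin n)) (i : ℕ) (hi : i + 1 + 1 < n) :
    edgeSign n σ i (Nat.lt_of_succ_lt hi)
      * edgeSign n (σ * adjSwap n i (Nat.lt_of_succ_lt hi)) (i + 1) hi
      * edgeSign n (σ * adjSwap n i (Nat.lt_of_succ_lt hi) * adjSwap n (i+1) hi) i
          (Nat.lt_of_succ_lt hi)
      * edgeSign n (σ * adjSwap n i (Nat.lt_of_succ_lt hi) * adjSwap n (i+1) hi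
          * adjSwap n i (Nat.lt_of_succ_lt hi)) (i + 1) hi
      * edgeSign n (σ * adjSwap n (i+1) hi * adjSwap n i (Nat.lt_of_succ_lt hi)) i
          (Nat.lt_of_succ_lt hi)
      * edgeSign n (σ * adjSwap n (i+1) hi) (i + 1) hi = 1 := by
  have hb : i + 1 < n := Nat.lt_of_succ_lt hi
  have ha : i < n := Nat.lt_of_succ_lt hb
  -- positions
  set A : Fin n := ⟨i, Nat.lt_of_succ_lt hb⟩ with hA
  set B : Fin n := ⟨i+1, hb⟩ with hB
  set C : Fin n := ⟨i+1+1, hi⟩ with hC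
  rw [edgeSign_eq, edgeSign_eq, edgeSign_eq, edgeSign_eq, edgeSign_eq, edgeSign_eq]
  simp only [Fsgn_mul_swap]
  -- value computations
  have v1 : (σ * adjSwap n i hb) B = σ A := mul_adjSwap_snd hb σ
  have v1' : (σ * adjSwap n i hb) A = σ B := mul_adjSwap_fst hb σ
  have v2 : (σ * adjSwap n i hb) C = σ C :=
    mul_adjSwap_apply_of_ne hb σ C (by simp [hC]; omega) (by simp [hC])
  have v3 : (σ * adjSwap n i hb * adjSwap n (i+1) hi) A = σ B := by
    rw [mul_adjSwap_apply_of_ne hi _ A (by simp [hA]) (by simp [hA]; omega), v1']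
  have v4 : (σ * adjSwap n i hb * adjSwap n (i+1) hi) B = σ C := by
    rw [show B = ⟨i+1, Nat.lt_of_succ_lt hi⟩ from rfl, mul_adjSwap_fst hi _]
    exact v2
  have v5 : (σ * adjSwap n i hb * adjSwap n (i+1) hi) C = σ A := by
    rw [show C = ⟨i+1+1, hi⟩ from rfl, mul_adjSwap_snd hi _]
    exact v1
  have v6 : (σ * adjSwap n i hb * adjSwap n (i+1) hi * adjSwap n i hb) B = σ B := by
    rw [show B = ⟨i+1, hb⟩ from rfl, mul_adjSwap_snd hb _]
    exact v3
  have v7 : (σ * adjSwap n i hb * adjSwap n (i+1) hi * adjSwap n i hb) C = σ A := by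
    rw [mul_adjSwap_apply_of_ne hb _ C (by simp [hC]; omega) (by simp [hC])]
    exact v5
  have v8 : (σ * adjSwap n (i+1) hi) B = σ C := mul_adjSwap_fst hi σ
  have v9 : (σ * adjSwap n (i+1) hi) C = σ B := mul_adjSwap_snd hi σ
  have v10 : (σ * adjSwap n (i+1) hi) A = σ A :=
    mul_adjSwap_apply_of_ne hi σ A (by simp [hA]) (by simp [hA]; omega)
  have v11 : (σ * adjSwap n (i+1) hi * adjSwap n i hb) A = σ C := by
    rw [show A = ⟨i, Nat.lt_of_succ_lt hb⟩ from rfl, mul_adjSwap_fst hb _]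
    exact v8
  have v12 : (σ * adjSwap n (i+1) hi * adjSwap n i hb) B = σ A := by
    rw [show B = ⟨i+1, hb⟩ from rfl, mul_adjSwap_snd hb _]
    exact v10
  rw [← hA, ← hB, ← hC]
  simp only [v1, v1', v2, v3, v4, v5, v6, v7, v8, v9, v10, v11, v12]
  -- normalise maxes
  rw [max_comm (σ B).val (σ A).val, max_comm (σ C).val (σ A).val,
    max_comm (σ C).val (σ B).val]
  -- distinctness
  have n12 : σ A ≠ σ B := by
    intro hc; have := σ.injective hc
    rw [hA, hB, Fin.mk.injEq] at this; omega
  have n13 : σ A ≠ σ C := by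
    intro hc; have := σ.injective hc
    rw [hA, hC, Fin.mk.injEq] at this; omega
  have n23 : σ B ≠ σ C := by
    intro hc; have := σ.injective hc
    rw [hB, hC, Fin.mk.injEq] at this; omega
  have m12 : (σ A).val ≠ (σ B).val := fun hc => n12 (Fin.val_injective hc)
  have m13 : (σ A).val ≠ (σ C).val := fun hc => n13 (Fin.val_injective hc)
  have m23 : (σ B).val ≠ (σ C).val := fun hc => n23 (Fin.val_injective hc)
  trans ((if σ A < σ B then (1:ℤ) else -1) * (if σ B < σ A then (1:ℤ) else -1))
    * ((if σ A < σ C then (1:ℤ) else -1) * (if σ C < σ A then (1:ℤ) else -1))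
    * ((if σ B < σ C then (1:ℤ) else -1) * (if σ C < σ B then (1:ℤ) else -1))
    * (Fsgn n σ (max (σ A).val (σ B).val) * Fsgn n σ (max (σ A).val (σ B).val))
    * (Fsgn n σ (max (σ A).val (σ C).val) * Fsgn n σ (max (σ A).val (σ C).val))
    * (Fsgn n σ (max (σ B).val (σ C).val) * Fsgn n σ (max (σ B).val (σ C).val))
    * (eps (max (σ A).val (σ B).val) (max (σ A).val (σ B).val)
        * eps (max (σ A).val (σ C).val) (max (σ A).val (σ B).val)
        * eps (max (σ B).val (σ C).val) (max (σ A).val (σ B).val)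
      * (eps (max (σ A).val (σ B).val) (max (σ A).val (σ C).val)
        * eps (max (σ A).val (σ C).val) (max (σ A).val (σ C).val)
        * eps (max (σ B).val (σ C).val) (max (σ A).val (σ C).val))
      * (eps (max (σ A).val (σ B).val) (max (σ B).val (σ C).val)
        * eps (max (σ A).val (σ C).val) (max (σ B).val (σ C).val)
        * eps (max (σ B).val (σ C).val) (max (σ B).val (σ C).val)))
  · ring
  · rw [sgn_pair n12, sgn_pair n13, sgn_pair n23, Fsgn_sq, Fsgn_sq, Fsgn_sq,
      eps_nine _ _ _ m12 m13 m23]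
    norm_num

end

theorem edgeSign_square_hexagon (n : ℕ) :
    (∀ (σ : Equiv.Perm (Fin n)) (i j : ℕ) (hi : i + 1 < n) (hj : j + 1 < n),
      i + 1 < j →
      edgeSign n σ i hi * edgeSign n (σ * adjSwap n i hi) j hj
        * edgeSign n (σ * adjSwap n j hj) i hi * edgeSign n σ j hj = -1) ∧
    (∀ (σ : Equiv.Perm (Fin n)) (i : ℕ) (hi : i + 1 + 1 < n),
      edgeSign n σ i (Nat.lt_of_succ_lt hi)
        * edgeSign n (σ * adjSwap n i (Nat.lt_of_succ_lt hi)) (i + 1) hi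
        * edgeSign n (σ * adjSwap n i (Nat.lt_of_succ_lt hi) * adjSwap n (i+1) hi) i
            (Nat.lt_of_succ_lt hi)
        * edgeSign n (σ * adjSwap n i (Nat.lt_of_succ_lt hi) * adjSwap n (i+1) hi
            * adjSwap n i (Nat.lt_of_succ_lt hi)) (i + 1) hi
        * edgeSign n (σ * adjSwap n (i+1) hi * adjSwap n i (Nat.lt_of_succ_lt hi)) i
            (Nat.lt_of_succ_lt hi)
        * edgeSign n (σ * adjSwap n (i+1) hi) (i + 1) hi = 1) := by
  exact ⟨fun σ i j hi hj hij => square_part n σ i j hi hj hij,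
    fun σ i hi => hexagon_part n σ i hi⟩
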